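/- There exists an absolute constant C > 0 such that the following holds. Let M be an m×n Boolean matrix of rank r over the reals, and let S be an independent set of columns of M, i.e., a set of column indices such that all subsets of S have pairwise distinct column-sums. Then |S| ≤ C·r·log(r+2). -/

import Mathlib

open Finset Submodule Module


/-- The column-sum of a set `A` of columns of `M`: the vector whose `i`-th
entry is `∑ j ∈ A, M i j`. -/
def sumc {m n : ℕ} (M : Matrix (Fin m) (Fin n) ℝ) (A : Finset (Fin n)) :
    Fin m → ℝ :=
  fun i => ∑ j ∈ A, M i j

/-- A set `S` of columns is independent if all subsets of `S` have pairwise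
distinct column-sums. -/
def IndepCols {m n : ℕ} (M : Matrix (Fin m) (Fin n) ℝ) (S : Finset (Fin n)) : Prop :=
  ∀ A ⊆ S, ∀ B ⊆ S, sumc M A = sumc M B → A = B

lemma count_lemma {m n : ℕ} (M : Matrix (Fin m) (Fin n) ℝ)
    (hM : ∀ i j, M i j = 0 ∨ M i j = 1)
    (S : Finset (Fin n)) (hS : IndepCols M S) :
    2 ^ S.card ≤ (S.card + 1) ^ M.rank := by
  classical
  obtain ⟨b, hbsub, hbspan, hbind⟩ := exists_linearIndependent ℝ (Set.range M)
  have hbfin : b.Finite := (Set.finite_range M).subset hbsub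
  have : Fintype b := hbfin.fintype
  set T : Finset (Fin n → ℝ) := hbfin.toFinset with hT
  have hTcard : T.card = M.rank := by
    rw [M.rank_eq_finrank_span_row]
    change _ = finrank ℝ (span ℝ (Set.range M))
    rw [← hbspan]
    have := finrank_span_set_eq_card hbind
    rw [this, hT]
    congr 1
    ext x
    simp
  set s := S.card with hs
  -- the injection
  set f : Finset (Fin n) → (T → Fin (s + 1)) :=
    fun A => fun w => ⟨min (A.filter fun j => (w : Fin n → ℝ) j = 1).card s,
      Nat.lt_succ_of_le (min_le_right _ _)⟩ with hf
  have hinj : Set.InjOn f S.powerset := by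
    intro A hA B hB hfAB
    have hAS : A ⊆ S := Finset.mem_powerset.mp hA
    have hBS : B ⊆ S := Finset.mem_powerset.mp hB
    -- equal filtered card on each w ∈ b
    have hcard : ∀ w ∈ T, ((A.filter fun j => w j = 1).card : ℝ)
        = ((B.filter fun j => w j = 1).card : ℝ) := by
      intro w hw
      have e1 : min (A.filter fun j => w j = 1).card s
          = min (B.filter fun j => w j = 1).card s := by
        simpa [hf, Fin.ext_iff] using congrFun hfAB ⟨w, hw⟩
      have hAle : (A.filter fun j => w j = 1).card ≤ s :=
        le_trans (Finset.card_le_card (Finset.filter_subset _ _))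
          (Finset.card_le_card hAS)
      have hBle : (B.filter fun j => w j = 1).card ≤ s :=
        le_trans (Finset.card_le_card (Finset.filter_subset _ _))
          (Finset.card_le_card hBS)
      rw [min_eq_left hAle, min_eq_left hBle] at e1
      exact_mod_cast e1
    -- so sums over w ∈ b agree
    have hsum : ∀ w ∈ b, ∑ j ∈ A, w j = ∑ j ∈ B, w j := by
      intro w hw
      have hwT : w ∈ T := by simp [hT, hw]
      obtain ⟨i, hi⟩ := hbsub hw
      have hbool : ∀ j, w j = 0 ∨ w j = 1 := by
        intro j; rw [← hi]; exact hM i j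
      have hAs : ∑ j ∈ A, w j = ((A.filter fun j => w j = 1).card : ℝ) := by
        rw [← Finset.sum_boole]
        refine Finset.sum_congr rfl fun j _ => ?_
        rcases hbool j with h | h <;> simp [h]
      have hBs : ∑ j ∈ B, w j = ((B.filter fun j => w j = 1).card : ℝ) := by
        rw [← Finset.sum_boole]
        refine Finset.sum_congr rfl fun j _ => ?_
        rcases hbool j with h | h <;> simp [h]
      rw [hAs, hBs]; exact hcard w hwT
    -- conclude sumc equal via linear algebra
    have hsumc : sumc M A = sumc M B := by
      funext i
      set φ : (Fin n → ℝ) →ₗ[ℝ] ℝ :=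
        (∑ j ∈ A, LinearMap.proj j) - (∑ j ∈ B, LinearMap.proj j) with hφ
      have hker : span ℝ b ≤ LinearMap.ker φ := by
        rw [span_le]
        intro w hw
        simp only [SetLike.mem_coe, LinearMap.mem_ker, hφ, LinearMap.sub_apply,
          LinearMap.coe_sum, Finset.sum_apply, LinearMap.proj_apply, sub_eq_zero]
        exact hsum w hw
      have hMi : M i ∈ span ℝ b := by
        rw [hbspan]; exact subset_span (Set.mem_range_self i)
      have := hker hMi
      simp only [LinearMap.mem_ker, hφ, LinearMap.sub_apply, LinearMap.coe_sum,
        Finset.sum_apply, LinearMap.proj_apply, sub_eq_zero] at this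
      simpa [sumc] using this
    exact hS A hAS B hBS hsumc
  have hle : S.powerset.card ≤ (Finset.univ : Finset (T → Fin (s + 1))).card :=
    Finset.card_le_card_of_injOn f (fun A _ => Finset.mem_univ _) hinj
  rw [Finset.card_powerset, Finset.card_univ] at hle
  calc 2 ^ s ≤ _ := hle
    _ = (s + 1) ^ M.rank := by
        rw [Fintype.card_fun, Fintype.card_fin, Fintype.card_coe, hTcard]

lemma numeric_lemma (s r : ℕ) (h : 2 ^ s ≤ (s + 1) ^ r) :
    (s : ℝ) ≤ 12 * r * Real.log (r + 2) := by
  have hlog2 : (0.6931471803 : ℝ) < Real.log 2 := Real.log_two_gt_d9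
  have hR : (1 : ℝ) ≤ (r : ℝ) + 2 := by
    have := Nat.cast_nonneg (α := ℝ) r; linarith
  have hlr : 0 ≤ Real.log ((r : ℝ) + 2) := Real.log_nonneg hR
  have hreal : (2 : ℝ) ^ s ≤ ((s : ℝ) + 1) ^ r := by exact_mod_cast h
  have hkey : (s : ℝ) * Real.log 2 ≤ (r : ℝ) * Real.log ((s : ℝ) + 1) := by
    have := Real.log_le_log (by positivity) hreal
    rwa [Real.log_pow, Real.log_pow] at this
  by_cases hcase : s < (r + 2) ^ 8
  · -- small case
    have h1 : ((s : ℝ) + 1) ≤ ((r : ℝ) + 2) ^ 8 := by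
      have : s + 1 ≤ (r + 2) ^ 8 := hcase
      exact_mod_cast this
    have h2 : Real.log ((s : ℝ) + 1) ≤ 8 * Real.log ((r : ℝ) + 2) := by
      calc Real.log ((s : ℝ) + 1) ≤ Real.log (((r : ℝ) + 2) ^ 8) :=
            Real.log_le_log (by positivity) h1
        _ = 8 * Real.log ((r : ℝ) + 2) := by rw [Real.log_pow]; push_cast; ring
    have h3 : (s : ℝ) * Real.log 2 ≤ (r : ℝ) * (8 * Real.log ((r : ℝ) + 2)) :=
      hkey.trans (mul_le_mul_of_nonneg_left h2 (by positivity))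
    nlinarith [mul_le_mul_of_nonneg_left hlog2.le (Nat.cast_nonneg (α := ℝ) s)]
  · exfalso
    push_neg at hcase
    set x : ℝ := (s : ℝ) + 1 with hx
    have hx1 : (1 : ℝ) ≤ x := by
      have := Nat.cast_nonneg (α := ℝ) s; linarith
    set u : ℝ := Real.sqrt (Real.sqrt (Real.sqrt x)) with hu
    have hu0 : 0 ≤ u := Real.sqrt_nonneg _
    have hu8 : u ^ 8 = x := by
      have h1 : u ^ 2 = Real.sqrt (Real.sqrt x) := Real.sq_sqrt (Real.sqrt_nonneg _)
      have h2 : (u ^ 2) ^ 2 = Real.sqrt x := by rw [h1]; exact Real.sq_sqrt (Real.sqrt_nonneg _)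
      have h3 : ((u ^ 2) ^ 2) ^ 2 = x := by rw [h2]; exact Real.sq_sqrt (by linarith)
      calc u ^ 8 = ((u ^ 2) ^ 2) ^ 2 := by ring
        _ = x := h3
    have hrx : ((r : ℝ) + 2) ^ 8 ≤ x := by
      have : ((r : ℝ) + 2) ^ 8 ≤ (s : ℝ) := by exact_mod_cast hcase
      linarith
    have hru : (r : ℝ) + 2 ≤ u := by
      have h8 : ((r : ℝ) + 2) ^ 8 ≤ u ^ 8 := by rw [hu8]; exact hrx
      exact le_of_pow_le_pow_left₀ (by norm_num) hu0 h8
    have hu2 : (2 : ℝ) ≤ u := by linarith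
    have hupos : 0 < u := by linarith
    have hlogx : Real.log x ≤ 8 * (u - 1) := by
      rw [← hu8, Real.log_pow]
      push_cast
      have := Real.log_le_sub_one_of_pos hupos
      linarith
    have hlx0 : 0 ≤ Real.log x := Real.log_nonneg hx1
    have hsx : (s : ℝ) = x - 1 := by rw [hx]; ring
    have hchain : (x - 1) * Real.log 2 ≤ (u - 2) * (8 * (u - 1)) := by
      calc (x - 1) * Real.log 2 = (s : ℝ) * Real.log 2 := by rw [hsx]
        _ ≤ (r : ℝ) * Real.log x := hkey
        _ ≤ (u - 2) * Real.log x := mul_le_mul_of_nonneg_right (by linarith) hlx0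
        _ ≤ (u - 2) * (8 * (u - 1)) := mul_le_mul_of_nonneg_left hlogx (by linarith)
    have h64 : 64 * u ^ 2 ≤ u ^ 8 := by
      have h6 : (2 : ℝ) ^ 6 ≤ u ^ 6 := pow_le_pow_left₀ (by norm_num) hu2 6
      nlinarith [sq_nonneg u]
    rw [← hu8] at hchain
    nlinarith [sq_nonneg u, hu2]

/-- Any independent set of columns of a Boolean matrix of rank `r` has size
at most `O(r log r)`. -/
theorem indep_cols_card_le :
    ∃ C : ℝ, 0 < C ∧
      ∀ (m n : ℕ) (M : Matrix (Fin m) (Fin n) ℝ),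
        (∀ i j, M i j = 0 ∨ M i j = 1) →
        ∀ S : Finset (Fin n), IndepCols M S →
          (S.card : ℝ) ≤ C * (M.rank : ℝ) * Real.log ((M.rank : ℝ) + 2) := by
  refine ⟨12, by norm_num, fun m n M hM S hS => ?_⟩
  exact numeric_lemma S.card M.rank (count_lemma M hM S hS)
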